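/- Every root λ of the cubic polynomial λ³ + 2νλ² + (1 + B₀² + ν²)λ + ν = 0 has negative real part whenever ν > 0. -/
import Mathlib


/-- Every root λ of λ³ + 2νλ² + (1 + B₀² + ν²)λ + ν = 0 has negative real part when ν > 0. -/
theorem cubic_roots_neg_re (ν B₀ : ℝ) (hν : 0 < ν) (lam : ℂ)
    (hroot : lam ^ 3 + 2 * (ν : ℂ) * lam ^ 2 + ((1 : ℂ) + (B₀ : ℂ) ^ 2 + (ν : ℂ) ^ 2) * lam
      + (ν : ℂ) = 0) :
    lam.re < 0 := by
  by_contra h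
  push_neg at h
  have hre := congrArg Complex.re hroot
  have him := congrArg Complex.im hroot
  simp only [pow_succ, pow_zero, one_mul, Complex.add_re, Complex.add_im, Complex.mul_re,
    Complex.mul_im, Complex.ofReal_re, Complex.ofReal_im, Complex.one_re, Complex.one_im,
    Complex.zero_re, Complex.zero_im, Complex.re_ofNat, Complex.im_ofNat, mul_zero, zero_mul,
    mul_one, sub_zero, zero_sub, add_zero, zero_add, neg_zero] at hre him
  set x := lam.re with hx
  set y := lam.im with hy
  have hre' : x^3 - 3*x*y^2 + 2*ν*(x^2 - y^2) + (1 + B₀^2 + ν^2)*x + ν = 0 := by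
    linear_combination hre
  have him' : y * (3*x^2 - y^2 + 4*ν*x + (1 + B₀^2 + ν^2)) = 0 := by
    linear_combination him
  rcases mul_eq_zero.mp him' with hy0 | hysq
  · rw [hy0] at hre'
    nlinarith [sq_nonneg B₀, sq_nonneg x, mul_nonneg h (mul_nonneg h h), mul_pos hν hν,
      mul_nonneg h h]
  · have hysq' : y^2 = 3*x^2 + 4*ν*x + (1 + B₀^2 + ν^2) := by linarith
    rw [hysq'] at hre'
    nlinarith [sq_nonneg B₀, sq_nonneg x, mul_nonneg h (mul_nonneg h h), mul_pos hν hν,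
      mul_nonneg h h, mul_nonneg (mul_nonneg hν.le h) h, mul_nonneg hν.le h,
      mul_nonneg (mul_nonneg hν.le hν.le) h, mul_nonneg h (sq_nonneg B₀),
      mul_nonneg hν.le (sq_nonneg B₀)]
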